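/- arXiv:1202.0136 — 7 statements merged into one kernel-verified Lean document; each statement's English description precedes it below -/
import Mathlib

section
/- Fix a real number D > 1, let Σ be a finite nonempty set, μ a positive probability vector on Σ, R ∈ (0,2), and set α := R/2. Suppose 0 < w̲ ≤ w̄ are a lower water level and an upper water level for μ and α, respectively, and let ν† be the clipped distribution. Then the lengths l†(x) := −log_D ν†(x) satisfy l†(x) ≥ 0 for all x, ∑_{x∈Σ} D^{−l†(x)} = 1, and for every length function l : Σ → ℝ with l(x) ≥ 0 for all x and ∑_{x∈Σ} D^{−l(x)} ≤ 1, one has (R/2)(max_{x∈Σ} l†(x) − min_{x∈Σ} l†(x)) + ∑_{x∈Σ} l†(x)μ(x) ≤ (R/2)(max_{x∈Σ} l(x) − min_{x∈Σ} l(x)) + ∑_{x∈Σ} l(x)μ(x). -/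
open Finset

/-- The waterfilling solution: the codeword lengths built from the clipped distribution
satisfy Kraft with equality and minimize the equivalent minimax pay-off. -/
theorem stmt_1 {α : Type*} [Fintype α] [Nonempty α]
    (D : ℝ) (hD : 1 < D)
    (μ : α → ℝ) (hμpos : ∀ x, 0 < μ x) (hμ1 : ∑ x, μ x = 1)
    (R : ℝ) (hR0 : 0 < R) (hR2 : R < 2)
    (wlo whi : ℝ) (hwlo : 0 < wlo) (hwle : wlo ≤ whi)
    (hlow : ∑ x, max (wlo - μ x) 0 = R / 2)
    (hup : ∑ x, max (μ x - whi) 0 = R / 2)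
    (ν lopt : α → ℝ)
    (hν : ∀ x, ν x = min whi (max wlo (μ x)))
    (hlopt : ∀ x, lopt x = -(Real.log (ν x) / Real.log D)) :
    (∀ x, 0 ≤ lopt x) ∧
    (∑ x, D ^ (-(lopt x)) = 1) ∧
    (∀ l : α → ℝ, (∀ x, 0 ≤ l x) → ∑ x, D ^ (-(l x)) ≤ 1 →
      R / 2 * (univ.sup' univ_nonempty lopt - univ.inf' univ_nonempty lopt) +
          ∑ x, lopt x * μ x ≤
        R / 2 * (univ.sup' univ_nonempty l - univ.inf' univ_nonempty l) +
          ∑ x, l x * μ x) := by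
  have hD0 : (0:ℝ) < D := lt_trans one_pos hD
  have hDne : D ≠ 1 := ne_of_gt hD
  have hlogD : 0 < Real.log D := Real.log_pos hD
  -- the two "water" adjustment functions
  set a : α → ℝ := fun x => max (wlo - μ x) 0 with ha
  set b : α → ℝ := fun x => max (μ x - whi) 0 with hb
  have ha0 : ∀ x, 0 ≤ a x := fun x => le_max_right _ _
  have hb0 : ∀ x, 0 ≤ b x := fun x => le_max_right _ _
  have hsa : ∑ x, a x = R / 2 := hlow
  have hsb : ∑ x, b x = R / 2 := hup
  have hνeq : ∀ x, ν x = μ x + a x - b x := by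
    intro x
    rw [hν, ha, hb]
    rcases le_or_gt wlo (μ x) with h1 | h1
    · rcases le_or_gt (μ x) whi with h2 | h2
      · simp only [max_eq_right h1, min_eq_right h2]
        rw [max_eq_right (by linarith), max_eq_right (by linarith)]
        ring
      · simp only [max_eq_right h1, min_eq_left (le_of_lt h2)]
        rw [max_eq_right (by linarith), max_eq_left (by linarith)]
        ring
    · have h2 : μ x ≤ whi := le_trans (le_of_lt h1) hwle
      simp only [max_eq_left (le_of_lt h1), min_eq_right hwle]
      rw [max_eq_left (by linarith), max_eq_right (by linarith)]
      ring
  have hνlo : ∀ x, wlo ≤ ν x := by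
    intro x; rw [hν]; exact le_min hwle (le_max_left _ _)
  have hνhi : ∀ x, ν x ≤ whi := by
    intro x; rw [hν]; exact min_le_left _ _
  have hνpos : ∀ x, 0 < ν x := fun x => lt_of_lt_of_le hwlo (hνlo x)
  have hνsum : ∑ x, ν x = 1 := by
    calc ∑ x, ν x = ∑ x, (μ x + a x - b x) := by
          exact Finset.sum_congr rfl (fun x _ => hνeq x)
      _ = (∑ x, μ x) + (∑ x, a x) - (∑ x, b x) := by
          rw [Finset.sum_sub_distrib, Finset.sum_add_distrib]
      _ = 1 := by rw [hμ1, hsa, hsb]; ring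
  have hν1 : ∀ x, ν x ≤ 1 := by
    intro x
    rw [← hνsum]
    exact Finset.single_le_sum (fun y _ => (hνpos y).le) (mem_univ x)
  have hlopt' : ∀ x, lopt x = -Real.logb D (ν x) := by
    intro x; rw [hlopt, Real.log_div_log]
  have hDlopt : ∀ x, D ^ (-(lopt x)) = ν x := by
    intro x
    rw [hlopt', neg_neg]
    exact Real.rpow_logb hD0 hDne (hνpos x)
  have hnn : ∀ x, 0 ≤ lopt x := by
    intro x
    rw [hlopt']
    simp only [neg_nonneg]
    exact Real.logb_nonpos hD (hνpos x).le (hν1 x)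
  have hkraft : ∑ x, D ^ (-(lopt x)) = 1 := by
    rw [Finset.sum_congr rfl (fun x _ => hDlopt x)]; exact hνsum
  refine ⟨hnn, hkraft, ?_⟩
  -- existence of points hitting the two water levels
  have hx0 : ∃ x0, ν x0 = wlo := by
    by_contra h
    push_neg at h
    have hz : ∀ x ∈ (univ : Finset α), a x = 0 := by
      intro x _
      by_contra hax
      have hax' : 0 < a x := lt_of_le_of_ne (ha0 x) (Ne.symm hax)
      have : wlo - μ x > 0 := by
        by_contra hc
        push_neg at hc
        rw [ha] at hax'
        simp only [max_eq_right hc] at hax'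
        exact lt_irrefl _ hax'
      have : ν x = wlo := by
        rw [hν, max_eq_left (by linarith), min_eq_right hwle]
      exact h x this
    have : ∑ x, a x = 0 := Finset.sum_eq_zero hz
    rw [hsa] at this
    linarith
  have hx1 : ∃ x1, ν x1 = whi := by
    by_contra h
    push_neg at h
    have hz : ∀ x ∈ (univ : Finset α), b x = 0 := by
      intro x _
      by_contra hbx
      have hbx' : 0 < b x := lt_of_le_of_ne (hb0 x) (Ne.symm hbx)
      have hgt : μ x - whi > 0 := by
        by_contra hc
        push_neg at hc
        rw [hb] at hbx'
        simp only [max_eq_right hc] at hbx'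
        exact lt_irrefl _ hbx'
      have : ν x = whi := by
        rw [hν, max_eq_right (by linarith), min_eq_left (by linarith)]
      exact h x this
    have : ∑ x, b x = 0 := Finset.sum_eq_zero hz
    rw [hsb] at this
    linarith
  obtain ⟨x0, hx0⟩ := hx0
  obtain ⟨x1, hx1⟩ := hx1
  have hwhipos : 0 < whi := lt_of_lt_of_le hwlo hwle
  have hsup : univ.sup' univ_nonempty lopt = -Real.logb D wlo := by
    apply le_antisymm
    · apply Finset.sup'_le
      intro x _
      rw [hlopt']
      exact neg_le_neg (Real.logb_le_logb_of_le hD hwlo (hνlo x))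
    · have := Finset.le_sup' lopt (mem_univ x0)
      rwa [hlopt', hx0] at this
  have hinf : univ.inf' univ_nonempty lopt = -Real.logb D whi := by
    apply le_antisymm
    · have := Finset.inf'_le lopt (mem_univ x1)
      rwa [hlopt', hx1] at this
    · apply Finset.le_inf'
      intro x _
      rw [hlopt']
      exact neg_le_neg (Real.logb_le_logb_of_le hD (hνpos x) (hνhi x))
  -- key upper bound for arbitrary l
  have hkey : ∀ l : α → ℝ,
      ∑ x, l x * ν x ≤
        R / 2 * (univ.sup' univ_nonempty l - univ.inf' univ_nonempty l) + ∑ x, l x * μ x := by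
    intro l
    have hsplit : ∑ x, l x * ν x = (∑ x, l x * μ x) + (∑ x, l x * a x) - (∑ x, l x * b x) := by
      rw [← Finset.sum_add_distrib, ← Finset.sum_sub_distrib]
      apply Finset.sum_congr rfl
      intro x _
      rw [hνeq x]; ring
    have hA : ∑ x, l x * a x ≤ univ.sup' univ_nonempty l * (R / 2) := by
      rw [← hsa, Finset.mul_sum]
      apply Finset.sum_le_sum
      intro x _
      exact mul_le_mul_of_nonneg_right (Finset.le_sup' l (mem_univ x)) (ha0 x)
    have hB : univ.inf' univ_nonempty l * (R / 2) ≤ ∑ x, l x * b x := by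
      rw [← hsb, Finset.mul_sum]
      apply Finset.sum_le_sum
      intro x _
      exact mul_le_mul_of_nonneg_right (Finset.inf'_le l (mem_univ x)) (hb0 x)
    rw [hsplit]
    nlinarith [hA, hB]
  -- equality for lopt
  have heq : ∑ x, lopt x * ν x =
      R / 2 * (univ.sup' univ_nonempty lopt - univ.inf' univ_nonempty lopt) +
        ∑ x, lopt x * μ x := by
    have hsplit : ∑ x, lopt x * ν x =
        (∑ x, lopt x * μ x) + (∑ x, lopt x * a x) - (∑ x, lopt x * b x) := by
      rw [← Finset.sum_add_distrib, ← Finset.sum_sub_distrib]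
      apply Finset.sum_congr rfl
      intro x _
      rw [hνeq x]; ring
    have hA : ∑ x, lopt x * a x = (-Real.logb D wlo) * (R / 2) := by
      rw [← hsa, Finset.mul_sum]
      apply Finset.sum_congr rfl
      intro x _
      rcases eq_or_lt_of_le (ha0 x) with h | h
      · rw [← h, mul_zero, mul_zero]
      · have hgt : wlo - μ x > 0 := by
          by_contra hc
          push_neg at hc
          rw [ha] at h
          simp only [max_eq_right hc] at h
          exact lt_irrefl _ h
        have hνx : ν x = wlo := by
          rw [hν, max_eq_left (by linarith), min_eq_right hwle]
        rw [hlopt', hνx]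
    have hB : ∑ x, lopt x * b x = (-Real.logb D whi) * (R / 2) := by
      rw [← hsb, Finset.mul_sum]
      apply Finset.sum_congr rfl
      intro x _
      rcases eq_or_lt_of_le (hb0 x) with h | h
      · rw [← h, mul_zero, mul_zero]
      · have hgt : μ x - whi > 0 := by
          by_contra hc
          push_neg at hc
          rw [hb] at h
          simp only [max_eq_right hc] at h
          exact lt_irrefl _ h
        have hνx : ν x = whi := by
          rw [hν, max_eq_right (by linarith), min_eq_left (by linarith)]
        rw [hlopt', hνx]
    rw [hsplit, hA, hB, hsup, hinf]
    ring
  -- Gibbs' inequality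
  intro l hl hkl
  have hgibbs : ∑ x, lopt x * ν x ≤ ∑ x, l x * ν x := by
    have hq : ∀ x, (0:ℝ) < D ^ (-(l x)) := fun x => Real.rpow_pos_of_pos hD0 _
    have hlq : ∀ x, Real.log (D ^ (-(l x))) = -(l x) * Real.log D := by
      intro x; exact Real.log_rpow hD0 _
    have hlx : ∀ x, l x = -(Real.log (D ^ (-(l x))) / Real.log D) := by
      intro x
      rw [hlq x]
      field_simp
    have hpt : ∀ x, ν x * (Real.log (D ^ (-(l x))) - Real.log (ν x)) ≤ D ^ (-(l x)) - ν x := by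
      intro x
      have h1 : Real.log (D ^ (-(l x)) / ν x) ≤ D ^ (-(l x)) / ν x - 1 :=
        Real.log_le_sub_one_of_pos (div_pos (hq x) (hνpos x))
      rw [Real.log_div (hq x).ne' (hνpos x).ne'] at h1
      have h2 := mul_le_mul_of_nonneg_left h1 (hνpos x).le
      calc ν x * (Real.log (D ^ (-(l x))) - Real.log (ν x))
          ≤ ν x * (D ^ (-(l x)) / ν x - 1) := h2
        _ = D ^ (-(l x)) - ν x := by
              rw [mul_sub, mul_one, mul_div_cancel₀ _ (hνpos x).ne']
    have hsumpt : ∑ x, ν x * (Real.log (D ^ (-(l x))) - Real.log (ν x)) ≤ 0 := by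
      calc ∑ x, ν x * (Real.log (D ^ (-(l x))) - Real.log (ν x))
          ≤ ∑ x, (D ^ (-(l x)) - ν x) := Finset.sum_le_sum (fun x _ => hpt x)
        _ = (∑ x, D ^ (-(l x))) - ∑ x, ν x := Finset.sum_sub_distrib _ _
        _ ≤ 0 := by rw [hνsum]; linarith
    have hdiff : ∑ x, l x * ν x - ∑ x, lopt x * ν x =
        (-(1 / Real.log D)) * ∑ x, ν x * (Real.log (D ^ (-(l x))) - Real.log (ν x)) := by
      rw [← Finset.sum_sub_distrib, Finset.mul_sum]
      apply Finset.sum_congr rfl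
      intro x _
      rw [hlopt, hlq x]
      field_simp
      ring
    have : 0 ≤ ∑ x, l x * ν x - ∑ x, lopt x * ν x := by
      rw [hdiff]
      have h1 : 0 ≤ -(1 / Real.log D) * 0 := by simp
      calc (0:ℝ) = -(1 / Real.log D) * 0 := by ring
        _ ≤ _ := by
            apply mul_le_mul_of_nonpos_left hsumpt
            simp only [neg_nonpos]
            positivity
    linarith
  calc R / 2 * (univ.sup' univ_nonempty lopt - univ.inf' univ_nonempty lopt) +
        ∑ x, lopt x * μ x = ∑ x, lopt x * ν x := heq.symm
    _ ≤ ∑ x, l x * ν x := hgibbs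
    _ ≤ _ := hkey l
end

section
/- Let Σ be a finite nonempty set, μ a positive probability vector on Σ, and α > 0. If w̲ is a lower water level for μ and α, then the set S := {x ∈ Σ : μ(x) < w̲} is nonempty and w̲ = (∑_{x∈S} μ(x) + α)/|S|. Likewise, if w̄ is an upper water level for μ and α, then the set T := {x ∈ Σ : μ(x) > w̄} is nonempty and w̄ = (∑_{x∈T} μ(x) − α)/|T|. -/
open Finset

lemma water_aux {α : Type*} [Fintype α] (f : α → ℝ) (a : ℝ) (ha : 0 < a)
    (hsum : ∑ x, max (f x) 0 = a) :
    (univ.filter fun x => 0 < f x).Nonempty ∧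
    ∑ x ∈ univ.filter fun x => 0 < f x, f x = a := by
  set S := univ.filter fun x => 0 < f x with hS
  have key : ∑ x ∈ S, f x = a := by
    rw [← hsum]
    rw [← Finset.sum_filter_add_sum_filter_not univ (fun x => 0 < f x)
      (fun x => max (f x) 0)]
    have h1 : ∑ x ∈ S, max (f x) 0 = ∑ x ∈ S, f x := by
      refine Finset.sum_congr rfl fun x hx => ?_
      simp only [hS, mem_filter] at hx
      exact max_eq_left hx.2.le
    have h2 : ∑ x ∈ univ.filter (fun x => ¬ 0 < f x), max (f x) 0 = 0 := by
      refine Finset.sum_eq_zero fun x hx => ?_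
      simp only [mem_filter, not_lt] at hx
      exact max_eq_right hx.2
    rw [h1, h2, add_zero]
  refine ⟨?_, key⟩
  by_contra h
  rw [Finset.not_nonempty_iff_eq_empty] at h
  rw [h, Finset.sum_empty] at key
  linarith

/-- Structure of the water levels: the set of probabilities strictly below the lower level
(resp. strictly above the upper level) is nonempty and the level is the corresponding
renormalized merged weight. -/
theorem stmt_2 {α : Type*} [Fintype α] [Nonempty α]
    (μ : α → ℝ) (hμpos : ∀ x, 0 < μ x) (hμ1 : ∑ x, μ x = 1)
    (a : ℝ) (ha : 0 < a) :
    (∀ wlo : ℝ, (∑ x, max (wlo - μ x) 0 = a) →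
      (univ.filter fun x => μ x < wlo).Nonempty ∧
      wlo = ((∑ x ∈ univ.filter fun x => μ x < wlo, μ x) + a) /
        ((univ.filter fun x => μ x < wlo).card : ℝ)) ∧
    (∀ whi : ℝ, (∑ x, max (μ x - whi) 0 = a) →
      (univ.filter fun x => whi < μ x).Nonempty ∧
      whi = ((∑ x ∈ univ.filter fun x => whi < μ x, μ x) - a) /
        ((univ.filter fun x => whi < μ x).card : ℝ)) := by
  constructor
  · intro w hw
    obtain ⟨hne, hkey⟩ := water_aux (fun x => w - μ x) a ha hw
    have hset : (univ.filter fun x => 0 < w - μ x) = (univ.filter fun x => μ x < w) := by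
      apply Finset.filter_congr; intro x _; simp [sub_pos]
    rw [hset] at hne hkey
    refine ⟨hne, ?_⟩
    rw [Finset.sum_sub_distrib, Finset.sum_const, nsmul_eq_mul] at hkey
    have hcard : (0 : ℝ) < ((univ.filter fun x => μ x < w).card : ℝ) := by
      exact_mod_cast Finset.card_pos.mpr hne
    field_simp
    linarith
  · intro w hw
    obtain ⟨hne, hkey⟩ := water_aux (fun x => μ x - w) a ha hw
    have hset : (univ.filter fun x => 0 < μ x - w) = (univ.filter fun x => w < μ x) := by
      apply Finset.filter_congr; intro x _; simp [sub_pos]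
    rw [hset] at hne hkey
    refine ⟨hne, ?_⟩
    rw [Finset.sum_sub_distrib, Finset.sum_const, nsmul_eq_mul] at hkey
    have hcard : (0 : ℝ) < ((univ.filter fun x => w < μ x).card : ℝ) := by
      exact_mod_cast Finset.card_pos.mpr hne
    field_simp
    linarith
end

section
/- Let Σ be a finite nonempty set and μ a positive probability vector on Σ. Let 0 ≤ α < α′, let w̲ be a lower water level for μ and α and w̲′ a lower water level for μ and α′; let w̄ be an upper water level for μ and α and w̄′ an upper water level for μ and α′. Then w̲ ≤ w̲′ and w̄ ≥ w̄′. Consequently, if in addition w̲ ≤ w̄ and w̲′ ≤ w̄′ and ν†, ν†′ denote the corresponding clipped distributions, then for every x ∈ Σ with μ(x) < w̲ one has ν†(x) ≤ ν†′(x), and for every x ∈ Σ with μ(x) > w̄ one has ν†(x) ≥ ν†′(x). -/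
open Finset

/-- Monotonicity of the water levels in `α`: the lower level increases, the upper level
decreases; consequently merged low weights increase and merged high weights decrease. -/
theorem stmt_6 {α : Type*} [Fintype α] [Nonempty α]
    (μ : α → ℝ) (hμpos : ∀ x, 0 < μ x) (hμ1 : ∑ x, μ x = 1)
    (a a' : ℝ) (ha : 0 ≤ a) (haa : a < a')
    (wlo wlo' whi whi' : ℝ)
    (hlow : ∑ x, max (wlo - μ x) 0 = a)
    (hlow' : ∑ x, max (wlo' - μ x) 0 = a')
    (hup : ∑ x, max (μ x - whi) 0 = a)
    (hup' : ∑ x, max (μ x - whi') 0 = a') :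
    wlo ≤ wlo' ∧ whi' ≤ whi ∧
    (wlo ≤ whi → wlo' ≤ whi' →
      (∀ x, μ x < wlo → min whi (max wlo (μ x)) ≤ min whi' (max wlo' (μ x))) ∧
      (∀ x, whi < μ x → min whi' (max wlo' (μ x)) ≤ min whi (max wlo (μ x)))) := by
  have h1 : wlo ≤ wlo' := by
    by_contra h
    push_neg at h
    have : a' ≤ a := by
      rw [← hlow, ← hlow']
      exact Finset.sum_le_sum fun x _ => max_le_max (by linarith) le_rfl
    linarith
  have h2 : whi' ≤ whi := by
    by_contra h
    push_neg at h
    have : a' ≤ a := by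
      rw [← hup, ← hup']
      exact Finset.sum_le_sum fun x _ => max_le_max (by linarith) le_rfl
    linarith
  refine ⟨h1, h2, fun hw hw' => ⟨fun x hx => ?_, fun x hx => ?_⟩⟩
  · simp only [max_def, min_def]
    split_ifs <;> linarith
  · simp only [max_def, min_def]
    split_ifs <;> linarith
end

section
/- Let Σ be a finite nonempty set and μ a positive probability vector on Σ. Let 0 < α ≤ α′, let w̲ ≤ w̄ be a lower and an upper water level for μ and α, and let w̲′ ≤ w̄′ be a lower and an upper water level for μ and α′; let ν† and ν†′ denote the corresponding clipped distributions. If x, y ∈ Σ satisfy μ(x) < w̲ and μ(y) < w̲ (so that ν†(x) = ν†(y) = w̲, i.e., the weights of x and y are merged at the minimum level at α), then also ν†′(x) = ν†′(y) = w̲′; in other words, once two symbols' weights merge at the minimum level they remain merged for every larger value of α. -/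
open Finset

/-- Once two symbols' weights merge at the minimum level they remain merged for every
larger value of `α`. -/
theorem stmt_7 {α : Type*} [Fintype α] [Nonempty α]
    (μ : α → ℝ) (hμpos : ∀ x, 0 < μ x) (hμ1 : ∑ x, μ x = 1)
    (a a' : ℝ) (ha : 0 < a) (haa : a ≤ a')
    (wlo whi : ℝ) (hw : wlo ≤ whi)
    (hlow : ∑ x, max (wlo - μ x) 0 = a)
    (hup : ∑ x, max (μ x - whi) 0 = a)
    (wlo' whi' : ℝ) (hw' : wlo' ≤ whi')
    (hlow' : ∑ x, max (wlo' - μ x) 0 = a')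
    (hup' : ∑ x, max (μ x - whi') 0 = a')
    (x y : α) (hx : μ x < wlo) (hy : μ y < wlo) :
    min whi' (max wlo' (μ x)) = wlo' ∧ min whi' (max wlo' (μ y)) = wlo' := by
  have hle : wlo ≤ wlo' := by
    by_contra h
    push_neg at h
    -- some term at level wlo' is positive since a' > 0
    have ha' : (0:ℝ) < a' := lt_of_lt_of_le ha haa
    have hz : ∃ z ∈ Finset.univ (α := α), 0 < max (wlo' - μ z) 0 := by
      by_contra hc
      push_neg at hc
      have : ∑ z, max (wlo' - μ z) 0 ≤ 0 := by
        apply Finset.sum_nonpos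
        intro i _
        exact hc i (Finset.mem_univ i)
      linarith [hlow']
    obtain ⟨z, _, hz⟩ := hz
    have hlt : ∑ i, max (wlo' - μ i) 0 < ∑ i, max (wlo - μ i) 0 := by
      apply Finset.sum_lt_sum
      · intro i _
        exact max_le_max (by linarith) le_rfl
      · refine ⟨z, Finset.mem_univ z, ?_⟩
        have hμz : μ z < wlo' := by
          by_contra hc
          push_neg at hc
          simp [max_eq_right (by linarith : wlo' - μ z ≤ 0)] at hz
        rw [max_eq_left (by linarith : (0:ℝ) ≤ wlo' - μ z),
            max_eq_left (by linarith : (0:ℝ) ≤ wlo - μ z)]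
        linarith
    rw [hlow, hlow'] at hlt
    linarith
  constructor <;>
  · rw [max_eq_left (by linarith)]
    exact min_eq_right hw'
end

section
/- Let Σ be a finite nonempty set, μ a probability vector on Σ, l : Σ → ℝ a function with l(x) ≥ 0 for all x, and R ∈ [0,2]. Suppose x⁰ ∈ Σ attains the maximum of l over Σ, x₀ ∈ Σ attains the minimum of l over Σ, x⁰ ≠ x₀, R/2 ≤ μ(x₀), and μ(x⁰) + R/2 ≤ 1. Define ν†(x) := μ(x) + (R/2)·(𝟙[x = x⁰] − 𝟙[x = x₀]). Then ν† is a probability vector on Σ, ‖ν† − μ‖_TV = R, and ∑_{x∈Σ} l(x)ν†(x) = (R/2)(max_{x∈Σ} l(x) − min_{x∈Σ} l(x)) + ∑_{x∈Σ} l(x)μ(x). -/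
open Finset

/-- The explicit maximizing distribution obtained by moving mass `R/2` from the symbol of
minimal length to the symbol of maximal length. -/
theorem stmt_9 {α : Type*} [Fintype α] [Nonempty α] [DecidableEq α]
    (μ : α → ℝ) (hμ0 : ∀ x, 0 ≤ μ x) (hμ1 : ∑ x, μ x = 1)
    (l : α → ℝ) (hl : ∀ x, 0 ≤ l x)
    (R : ℝ) (hR0 : 0 ≤ R) (hR2 : R ≤ 2)
    (x0 xm : α)
    (hx0 : l x0 = univ.sup' univ_nonempty l)
    (hxm : l xm = univ.inf' univ_nonempty l)
    (hne : x0 ≠ xm)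
    (hRμ : R / 2 ≤ μ xm) (hRμ' : μ x0 + R / 2 ≤ 1)
    (ν : α → ℝ)
    (hν : ∀ x, ν x = μ x +
      R / 2 * ((if x = x0 then (1 : ℝ) else 0) - (if x = xm then (1 : ℝ) else 0))) :
    (∀ x, 0 ≤ ν x) ∧ (∑ x, ν x = 1) ∧ (∑ x, |ν x - μ x| = R) ∧
    (∑ x, l x * ν x =
      R / 2 * (univ.sup' univ_nonempty l - univ.inf' univ_nonempty l) + ∑ x, l x * μ x) := by

  have key : ∀ (f : α → ℝ), ∑ x, f x * ((if x = x0 then (1:ℝ) else 0) - (if x = xm then (1:ℝ) else 0)) = f x0 - f xm := by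
    intro f
    simp only [mul_sub, mul_ite, mul_one, mul_zero]
    rw [Finset.sum_sub_distrib, Finset.sum_ite_eq' univ x0 f, Finset.sum_ite_eq' univ xm f]
    simp
  refine ⟨?_, ?_, ?_, ?_⟩
  · intro x
    rw [hν x]
    by_cases h0 : x = x0
    · rw [h0]
      simp [if_neg hne]
      have := hμ0 x0
      linarith
    · by_cases hm : x = xm
      · subst hm
        simp [if_neg h0]
        linarith [hRμ]
      · simp [h0, hm, hμ0 x]
  · have h1 := key (fun _ => (1:ℝ))
    simp only [one_mul] at h1
    simp only [hν]
    rw [Finset.sum_add_distrib, hμ1, ← Finset.mul_sum, h1]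
    ring
  · have : ∀ x, |ν x - μ x| = (R/2) * |((if x = x0 then (1:ℝ) else 0) - (if x = xm then (1:ℝ) else 0))| := by
      intro x
      rw [hν x]
      have h2 : μ x + R / 2 * ((if x = x0 then (1:ℝ) else 0) - (if x = xm then (1:ℝ) else 0)) - μ x = R / 2 * ((if x = x0 then (1:ℝ) else 0) - (if x = xm then (1:ℝ) else 0)) := by ring
      rw [h2, abs_mul, abs_of_nonneg (by positivity : (0:ℝ) ≤ R/2)]
    simp only [this]
    rw [← Finset.mul_sum]
    have habs : ∀ x, |((if x = x0 then (1:ℝ) else 0) - (if x = xm then (1:ℝ) else 0))| = ((if x = x0 then (1:ℝ) else 0) + (if x = xm then (1:ℝ) else 0)) := by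
      intro x
      by_cases h0 : x = x0
      · subst h0; simp [if_neg hne]
      · by_cases hm : x = xm <;> simp [h0, hm, Ne.symm hne]
    simp only [habs]
    rw [Finset.sum_add_distrib, Finset.sum_ite_eq' univ x0 (fun _ => (1:ℝ)), Finset.sum_ite_eq' univ xm (fun _ => (1:ℝ))]
    simp
    ring
  · simp only [hν, mul_add]
    rw [Finset.sum_add_distrib]
    have : ∀ x, l x * (R / 2 * ((if x = x0 then (1:ℝ) else 0) - (if x = xm then (1:ℝ) else 0))) = R / 2 * (l x * ((if x = x0 then (1:ℝ) else 0) - (if x = xm then (1:ℝ) else 0))) := by intro x; ring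
    simp only [this]
    rw [← Finset.mul_sum, key l, hx0, hxm]
    ring
end

section
/- Let Σ be a finite nonempty set, μ a positive probability vector on Σ, R ∈ [0,2], and α := R/2. Suppose 0 ≤ w̲ ≤ w̄ are a lower water level and an upper water level for μ and α, respectively, and let ν† be the clipped distribution ν†(x) := min(w̄, max(w̲, μ(x))). Then ν†(x) ≥ 0 for all x, ∑_{x∈Σ} ν†(x) = 1, and ‖ν† − μ‖_TV = R. -/
open Finset

/-- The clipped distribution is a probability vector lying on the boundary of the total
variational ball of radius `R`. -/
theorem stmt_12 {α : Type*} [Fintype α] [Nonempty α]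
    (μ : α → ℝ) (hμpos : ∀ x, 0 < μ x) (hμ1 : ∑ x, μ x = 1)
    (R : ℝ) (hR0 : 0 ≤ R) (hR2 : R ≤ 2)
    (wlo whi : ℝ) (hwlo : 0 ≤ wlo) (hwle : wlo ≤ whi)
    (hlow : ∑ x, max (wlo - μ x) 0 = R / 2)
    (hup : ∑ x, max (μ x - whi) 0 = R / 2)
    (ν : α → ℝ) (hν : ∀ x, ν x = min whi (max wlo (μ x))) :
    (∀ x, 0 ≤ ν x) ∧ (∑ x, ν x = 1) ∧ (∑ x, |ν x - μ x| = R) := by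
  have hdiff : ∀ x, ν x - μ x = max (wlo - μ x) 0 - max (μ x - whi) 0 := by
    intro x
    rw [hν x]
    rcases le_total (μ x) wlo with h | h
    · rw [max_eq_left h, min_eq_right (by linarith), max_eq_left (by linarith),
        max_eq_right (by linarith)]
      ring
    · rw [max_eq_right h]
      rcases le_total (μ x) whi with h2 | h2
      · rw [min_eq_right h2, max_eq_right (by linarith), max_eq_right (by linarith)]
        ring
      · rw [min_eq_left h2, max_eq_right (by linarith), max_eq_left (by linarith)]
        ring
  have habs : ∀ x, |ν x - μ x| = max (wlo - μ x) 0 + max (μ x - whi) 0 := by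
    intro x
    rw [hdiff x]
    rcases le_total (μ x) wlo with h | h
    · rw [max_eq_right (by linarith : μ x - whi ≤ 0)]
      rw [sub_zero, add_zero]; exact abs_of_nonneg (le_max_right (wlo - μ x) 0)
    · rw [max_eq_right (by linarith : wlo - μ x ≤ 0)]
      rw [zero_sub, abs_neg, zero_add]; exact abs_of_nonneg (le_max_right (μ x - whi) 0)
  refine ⟨fun x => ?_, ?_, ?_⟩
  · rw [hν x]
    exact le_min (by linarith) (le_trans hwlo (le_max_left _ _))
  · have : ∑ x, ν x = ∑ x, (μ x + (max (wlo - μ x) 0 - max (μ x - whi) 0)) := by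
      apply Finset.sum_congr rfl
      intro x _
      have := hdiff x; linarith
    rw [this]
    rw [Finset.sum_add_distrib, Finset.sum_sub_distrib, hμ1, hlow, hup]
    ring
  · calc ∑ x, |ν x - μ x| = ∑ x, (max (wlo - μ x) 0 + max (μ x - whi) 0) :=
        Finset.sum_congr rfl fun x _ => habs x
      _ = R := by rw [Finset.sum_add_distrib, hlow, hup]; ring
end

section
/- Fix a real number D > 1, let Σ be a finite nonempty set, μ a positive probability vector on Σ, R ∈ (0,2), and α := R/2. Suppose 0 < w̲ ≤ w̄ are a lower water level and an upper water level for μ and α, respectively, and let ν† be the clipped distribution. Then the minimum over all length functions l : Σ → ℝ with l(x) ≥ 0 for all x and ∑_{x∈Σ} D^{−l(x)} ≤ 1 of the pay-off G_R(l) := (R/2)(max_{x∈Σ} l(x) − min_{x∈Σ} l(x)) + ∑_{x∈Σ} l(x)μ(x) equals the D-ary entropy of ν†, namely −∑_{x∈Σ} ν†(x) log_D ν†(x), and this minimum is attained at l†(x) := −log_D ν†(x). -/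
open Finset

/-- The minimum of the minimax pay-off over Kraft-feasible length functions equals the
`D`-ary entropy of the clipped distribution and is attained at `l† = -log_D ν†`. -/
theorem stmt_13 {α : Type*} [Fintype α] [Nonempty α]
    (D : ℝ) (hD : 1 < D)
    (μ : α → ℝ) (hμpos : ∀ x, 0 < μ x) (hμ1 : ∑ x, μ x = 1)
    (R : ℝ) (hR0 : 0 < R) (hR2 : R < 2)
    (wlo whi : ℝ) (hwlo : 0 < wlo) (hwle : wlo ≤ whi)
    (hlow : ∑ x, max (wlo - μ x) 0 = R / 2)
    (hup : ∑ x, max (μ x - whi) 0 = R / 2)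
    (ν lopt : α → ℝ)
    (hν : ∀ x, ν x = min whi (max wlo (μ x)))
    (hlopt : ∀ x, lopt x = -(Real.log (ν x) / Real.log D)) :
    (∀ x, 0 ≤ lopt x) ∧
    (∑ x, D ^ (-(lopt x)) ≤ 1) ∧
    (R / 2 * (univ.sup' univ_nonempty lopt - univ.inf' univ_nonempty lopt) +
        ∑ x, lopt x * μ x = -∑ x, ν x * (Real.log (ν x) / Real.log D)) ∧
    (∀ l : α → ℝ, (∀ x, 0 ≤ l x) → ∑ x, D ^ (-(l x)) ≤ 1 →
      R / 2 * (univ.sup' univ_nonempty lopt - univ.inf' univ_nonempty lopt) +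
          ∑ x, lopt x * μ x ≤
        R / 2 * (univ.sup' univ_nonempty l - univ.inf' univ_nonempty l) +
          ∑ x, l x * μ x) := by
  have hD0 : (0:ℝ) < D := lt_trans one_pos hD
  have hL : 0 < Real.log D := Real.log_pos hD
  have hwhi : 0 < whi := lt_of_lt_of_le hwlo hwle
  have hνpos : ∀ x, 0 < ν x := fun x => by
    rw [hν x]; exact lt_min hwhi (lt_max_of_lt_left hwlo)
  have hνlo : ∀ x, wlo ≤ ν x := fun x => by
    rw [hν x]; exact le_min hwle (le_max_left _ _)
  have hνhi : ∀ x, ν x ≤ whi := fun x => by rw [hν x]; exact min_le_left _ _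
  have hcase1 : ∀ x, μ x ≤ wlo → ν x = wlo := fun x h => by
    rw [hν x, max_eq_left h, min_eq_right hwle]
  have hcase2 : ∀ x, wlo ≤ μ x → μ x ≤ whi → ν x = μ x := fun x h h2 => by
    rw [hν x, max_eq_right h, min_eq_right h2]
  have hcase3 : ∀ x, whi ≤ μ x → ν x = whi := fun x h => by
    rw [hν x, max_eq_right (hwle.trans h), min_eq_left h]
  have hdiff : ∀ x, ν x - μ x = max (wlo - μ x) 0 - max (μ x - whi) 0 := by
    intro x
    rcases le_total (μ x) wlo with h | h
    · rw [hcase1 x h, max_eq_left (by linarith), max_eq_right (by linarith)]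
      ring
    · rcases le_total (μ x) whi with h2 | h2
      · rw [hcase2 x h h2, max_eq_right (by linarith), max_eq_right (by linarith)]; ring
      · rw [hcase3 x h2, max_eq_right (by linarith), max_eq_left (by linarith)]; ring
  have hν1 : ∑ x, ν x = 1 := by
    have h1 : ∑ x, (ν x - μ x) = 0 := by
      calc ∑ x, (ν x - μ x) = ∑ x, (max (wlo - μ x) 0 - max (μ x - whi) 0) :=
            Finset.sum_congr rfl fun x _ => hdiff x
        _ = (∑ x, max (wlo - μ x) 0) - ∑ x, max (μ x - whi) 0 := Finset.sum_sub_distrib _ _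
        _ = 0 := by rw [hlow, hup]; ring
    rw [Finset.sum_sub_distrib, hμ1] at h1
    linarith
  have hνle1 : ∀ x, ν x ≤ 1 := by
    intro x
    rw [← hν1]
    exact Finset.single_le_sum (fun y _ => (hνpos y).le) (mem_univ x)
  have hDν : ∀ x, D ^ (-(lopt x)) = ν x := by
    intro x
    rw [hlopt x, neg_neg]
    have h : Real.log (ν x) / Real.log D = Real.logb D (ν x) := rfl
    rw [h, Real.rpow_logb hD0 (ne_of_gt hD) (hνpos x)]
  have hlopt0 : ∀ x, 0 ≤ lopt x := by
    intro x
    rw [hlopt x, neg_nonneg]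
    exact div_nonpos_iff.mpr (Or.inr ⟨Real.log_nonpos (hνpos x).le (hνle1 x), hL.le⟩)
  have hKraft : ∑ x, D ^ (-(lopt x)) ≤ 1 := by
    have h : ∑ x, D ^ (-(lopt x)) = ∑ x, ν x := Finset.sum_congr rfl fun x _ => hDν x
    rw [h, hν1]
  -- sup' and inf' of lopt
  have hloptle : ∀ x, lopt x ≤ -(Real.log wlo / Real.log D) := by
    intro x
    rw [hlopt x]
    have h1 := Real.log_le_log hwlo (hνlo x)
    have h2 : Real.log wlo / Real.log D ≤ Real.log (ν x) / Real.log D :=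
      div_le_div_of_nonneg_right h1 hL.le
    linarith
  have hloptge : ∀ x, -(Real.log whi / Real.log D) ≤ lopt x := by
    intro x
    rw [hlopt x]
    have h1 := Real.log_le_log (hνpos x) (hνhi x)
    have h2 : Real.log (ν x) / Real.log D ≤ Real.log whi / Real.log D :=
      div_le_div_of_nonneg_right h1 hL.le
    linarith
  have hex1 : ∃ x, μ x ≤ wlo := by
    by_contra hcon
    push_neg at hcon
    have h0 : ∑ x : α, max (wlo - μ x) 0 = 0 :=
      Finset.sum_eq_zero fun x _ => max_eq_right (by linarith [hcon x])
    rw [hlow] at h0; linarith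
  obtain ⟨x0, hx0⟩ := hex1
  have hx0l : lopt x0 = -(Real.log wlo / Real.log D) := by
    rw [hlopt x0, hcase1 x0 hx0]
  have hex2 : ∃ x, whi ≤ μ x := by
    by_contra hcon
    push_neg at hcon
    have h0 : ∑ x : α, max (μ x - whi) 0 = 0 :=
      Finset.sum_eq_zero fun x _ => max_eq_right (by linarith [hcon x])
    rw [hup] at h0; linarith
  obtain ⟨x1, hx1⟩ := hex2
  have hx1l : lopt x1 = -(Real.log whi / Real.log D) := by
    rw [hlopt x1, hcase3 x1 hx1]
  have hsup : univ.sup' univ_nonempty lopt = -(Real.log wlo / Real.log D) :=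
    le_antisymm (Finset.sup'_le _ _ fun x _ => hloptle x)
      (hx0l ▸ Finset.le_sup' lopt (mem_univ x0))
  have hinf : univ.inf' univ_nonempty lopt = -(Real.log whi / Real.log D) :=
    le_antisymm (hx1l ▸ Finset.inf'_le lopt (mem_univ x1))
      (Finset.le_inf' _ _ fun x _ => hloptge x)
  -- the equality (part 3)
  have hpt : ∀ x, lopt x * (ν x - μ x) =
      -(Real.log wlo / Real.log D) * max (wlo - μ x) 0 -
        -(Real.log whi / Real.log D) * max (μ x - whi) 0 := by
    intro x
    rcases le_total (μ x) wlo with h | h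
    · have h1 : lopt x = -(Real.log wlo / Real.log D) := by rw [hlopt x, hcase1 x h]
      rw [h1, hcase1 x h, max_eq_left (by linarith), max_eq_right (by linarith)]
      ring
    · rcases le_total (μ x) whi with h2 | h2
      · rw [hcase2 x h h2, max_eq_right (by linarith), max_eq_right (by linarith)]; ring
      · have h1 : lopt x = -(Real.log whi / Real.log D) := by rw [hlopt x, hcase3 x h2]
        rw [h1, hcase3 x h2, max_eq_right (by linarith), max_eq_left (by linarith)]
        ring
  have hsumpt : ∑ x, lopt x * (ν x - μ x) =
      R / 2 * (-(Real.log wlo / Real.log D) - -(Real.log whi / Real.log D)) := by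
    calc ∑ x, lopt x * (ν x - μ x)
        = ∑ x, (-(Real.log wlo / Real.log D) * max (wlo - μ x) 0 -
            -(Real.log whi / Real.log D) * max (μ x - whi) 0) :=
          Finset.sum_congr rfl fun x _ => hpt x
      _ = -(Real.log wlo / Real.log D) * ∑ x, max (wlo - μ x) 0 -
            -(Real.log whi / Real.log D) * ∑ x, max (μ x - whi) 0 := by
          rw [Finset.sum_sub_distrib, Finset.mul_sum, Finset.mul_sum]
      _ = _ := by rw [hlow, hup]; ring
  have hsum_expand : ∑ x, lopt x * (ν x - μ x) =
      ∑ x, ν x * lopt x - ∑ x, lopt x * μ x := by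
    rw [← Finset.sum_sub_distrib]
    exact Finset.sum_congr rfl fun x _ => by ring
  have hRHS : -∑ x, ν x * (Real.log (ν x) / Real.log D) = ∑ x, ν x * lopt x := by
    rw [← Finset.sum_neg_distrib]
    exact Finset.sum_congr rfl fun x _ => by rw [hlopt x]; ring
  have hpart3 : R / 2 * (univ.sup' univ_nonempty lopt - univ.inf' univ_nonempty lopt) +
      ∑ x, lopt x * μ x = -∑ x, ν x * (Real.log (ν x) / Real.log D) := by
    rw [hsup, hinf, hRHS]
    linarith [hsumpt, hsum_expand]
  refine ⟨hlopt0, hKraft, hpart3, ?_⟩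
  intro l hl0 hlK
  rw [hpart3, hRHS]
  -- Step B: Gibbs inequality  ∑ ν lopt ≤ ∑ ν l
  have hstepB : ∑ x, ν x * lopt x ≤ ∑ x, ν x * l x := by
    have key : ∀ x, ν x * lopt x - ν x * l x ≤ (D ^ (-(l x)) - ν x) / Real.log D := by
      intro x
      rw [le_div_iff₀ hL]
      have hqx : (0:ℝ) < D ^ (-(l x)) := Real.rpow_pos_of_pos hD0 _
      have hlog : Real.log (D ^ (-(l x))) = -(l x) * Real.log D := Real.log_rpow hD0 _
      have hle := Real.log_le_sub_one_of_pos (div_pos hqx (hνpos x))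
      rw [Real.log_div (ne_of_gt hqx) (ne_of_gt (hνpos x))] at hle
      have h5 : ν x * (D ^ (-(l x)) / ν x - 1) = D ^ (-(l x)) - ν x := by
        rw [mul_sub, mul_one, ← mul_div_assoc, mul_div_cancel_left₀ _ (ne_of_gt (hνpos x))]
      have h4 := mul_le_mul_of_nonneg_left hle (hνpos x).le
      have h3 : ν x * Real.log (D ^ (-(l x))) - ν x * Real.log (ν x) ≤
          D ^ (-(l x)) - ν x := by
        rw [mul_sub] at h4; linarith
      have ha : ν x * (lopt x * Real.log D) = -(ν x * Real.log (ν x)) := by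
        rw [hlopt x]; field_simp
      have hb : ν x * (l x * Real.log D) = -(ν x * Real.log (D ^ (-(l x)))) := by
        rw [hlog]; ring
      nlinarith [h3, ha, hb]
    have h6 := Finset.sum_le_sum fun x (_ : x ∈ univ) => key x
    have h7 : ∑ x, (D ^ (-(l x)) - ν x) / Real.log D =
        ((∑ x, D ^ (-(l x))) - 1) / Real.log D := by
      rw [← Finset.sum_div, Finset.sum_sub_distrib, hν1]
    have h8 : ((∑ x, D ^ (-(l x))) - 1) / Real.log D ≤ 0 :=
      div_nonpos_iff.mpr (Or.inr ⟨by linarith, hL.le⟩)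
    rw [h7, Finset.sum_sub_distrib] at h6
    linarith
  -- Step A
  have hstepA : ∑ x, ν x * l x ≤
      R / 2 * (univ.sup' univ_nonempty l - univ.inf' univ_nonempty l) +
        ∑ x, l x * μ x := by
    have e1 : ∀ x, max (wlo - μ x) 0 * l x ≤
        max (wlo - μ x) 0 * univ.sup' univ_nonempty l := fun x =>
      mul_le_mul_of_nonneg_left (Finset.le_sup' l (mem_univ x)) (le_max_right _ _)
    have e2 : ∀ x, max (μ x - whi) 0 * univ.inf' univ_nonempty l ≤
        max (μ x - whi) 0 * l x := fun x =>
      mul_le_mul_of_nonneg_left (Finset.inf'_le l (mem_univ x)) (le_max_right _ _)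
    have e3 : ∑ x, (ν x * l x - μ x * l x) =
        ∑ x, (max (wlo - μ x) 0 * l x - max (μ x - whi) 0 * l x) :=
      Finset.sum_congr rfl fun x _ => by rw [← sub_mul, hdiff x, sub_mul]
    have e4 := Finset.sum_le_sum fun x (_ : x ∈ univ) => e1 x
    have e5 := Finset.sum_le_sum fun x (_ : x ∈ univ) => e2 x
    have e6 : ∑ x, max (wlo - μ x) 0 * univ.sup' univ_nonempty l =
        R / 2 * univ.sup' univ_nonempty l := by rw [← Finset.sum_mul, hlow]
    have e7 : ∑ x, max (μ x - whi) 0 * univ.inf' univ_nonempty l =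
        R / 2 * univ.inf' univ_nonempty l := by rw [← Finset.sum_mul, hup]
    have e8 : ∑ x, (ν x * l x - μ x * l x) = ∑ x, ν x * l x - ∑ x, μ x * l x :=
      Finset.sum_sub_distrib _ _
    have e9 : ∑ x, (max (wlo - μ x) 0 * l x - max (μ x - whi) 0 * l x) =
        ∑ x, max (wlo - μ x) 0 * l x - ∑ x, max (μ x - whi) 0 * l x :=
      Finset.sum_sub_distrib _ _
    have e10 : ∑ x, μ x * l x = ∑ x, l x * μ x :=
      Finset.sum_congr rfl fun x _ => mul_comm _ _
    rw [e6] at e4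
    rw [e7] at e5
    rw [e8, e9] at e3
    linarith
  linarith
end
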